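/- Let B_{m,i} = {x ∈ ℤ₄^{2m} : wt₀(x) = 2m−i, wt₁(x) = i} and C_{m,u,v} = {x ∈ ℤ₄^{2m} : wt₁(x)=u, wt₃(x)=v, wt₀(x)=2m−u−v}. Then for x ∈ C_{m,u,v} and 0 ≤ h ≤ 2m−u−v, the number of pairs (y₁,y₂) ∈ B_{m,u+h} × B_{m,v+h} with x = y₁ − y₂ equals the binomial coefficient C(2m−u−v, h). -/
import Mathlib

/-- `wt_j(x)`: the number of coordinates of `x` equal to `j`. -/
def wt {n : ℕ} (j : ZMod 4) (x : Fin n → ZMod 4) : ℕ :=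
  (Finset.univ.filter fun i => x i = j).card

/-- `B_{m,i} = {x ∈ ℤ₄^{2m} : wt₀(x) = 2m - i, wt₁(x) = i}`. -/
def Bset (m i : ℕ) : Finset (Fin (2 * m) → ZMod 4) :=
  Finset.univ.filter fun x => wt 0 x = 2 * m - i ∧ wt 1 x = i

/-- `C_{m,u,v} = {x ∈ ℤ₄^{2m} : wt₁(x) = u, wt₃(x) = v, wt₀(x) = 2m - u - v}`. -/
def Cset (m u v : ℕ) : Finset (Fin (2 * m) → ZMod 4) :=
  Finset.univ.filter fun x => wt 1 x = u ∧ wt 3 x = v ∧ wt 0 x = 2 * m - u - v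

lemma mem_two {n : ℕ} (y : Fin n → ZMod 4) (a b : ZMod 4) (hab : a ≠ b)
    (hsum : wt a y + wt b y = n) : ∀ i, y i = a ∨ y i = b := by
  classical
  have hdisj : Disjoint (Finset.univ.filter fun i => y i = a)
      (Finset.univ.filter fun i => y i = b) := by
    rw [Finset.disjoint_left]
    intro j hj1 hj2
    simp only [Finset.mem_filter] at hj1 hj2
    exact hab (hj1.2 ▸ hj2.2 ▸ rfl)
  have hu : ((Finset.univ.filter fun i => y i = a) ∪
      (Finset.univ.filter fun i => y i = b)) = Finset.univ := by
    apply Finset.eq_univ_of_card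
    rw [Finset.card_union_of_disjoint hdisj]
    simpa [wt, Fintype.card_fin] using hsum
  intro i
  have hmem : i ∈ ((Finset.univ.filter fun i => y i = a) ∪
      (Finset.univ.filter fun i => y i = b)) := by rw [hu]; exact Finset.mem_univ i
  rcases Finset.mem_union.1 hmem with h | h <;> simp only [Finset.mem_filter] at h
  · exact Or.inl h.2
  · exact Or.inr h.2

lemma mem_three {n : ℕ} (y : Fin n → ZMod 4) (a b c : ZMod 4) (hab : a ≠ b) (hac : a ≠ c)
    (hbc : b ≠ c) (hsum : wt a y + wt b y + wt c y = n) :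
    ∀ i, y i = a ∨ y i = b ∨ y i = c := by
  classical
  have hd1 : Disjoint (Finset.univ.filter fun i => y i = a)
      (Finset.univ.filter fun i => y i = b) := by
    rw [Finset.disjoint_left]; intro j hj1 hj2
    simp only [Finset.mem_filter] at hj1 hj2
    exact hab (hj1.2 ▸ hj2.2 ▸ rfl)
  have hd2 : Disjoint ((Finset.univ.filter fun i => y i = a) ∪
      (Finset.univ.filter fun i => y i = b))
      (Finset.univ.filter fun i => y i = c) := by
    rw [Finset.disjoint_left]; intro j hj1 hj2
    simp only [Finset.mem_union, Finset.mem_filter] at hj1 hj2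
    rcases hj1 with h | h
    · exact hac (h.2 ▸ hj2.2 ▸ rfl)
    · exact hbc (h.2 ▸ hj2.2 ▸ rfl)
  have hu : ((Finset.univ.filter fun i => y i = a) ∪
      (Finset.univ.filter fun i => y i = b) ∪
      (Finset.univ.filter fun i => y i = c)) = Finset.univ := by
    apply Finset.eq_univ_of_card
    rw [Finset.card_union_of_disjoint hd2, Finset.card_union_of_disjoint hd1]
    simpa [wt, Fintype.card_fin] using hsum
  intro i
  have hmem : i ∈ ((Finset.univ.filter fun i => y i = a) ∪
      (Finset.univ.filter fun i => y i = b) ∪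
      (Finset.univ.filter fun i => y i = c)) := by rw [hu]; exact Finset.mem_univ i
  simp only [Finset.mem_union, Finset.mem_filter] at hmem
  tauto

/-- for `x ∈ C_{m,u,v}` and `0 ≤ h ≤ 2m - u - v`, the number of pairs
`(y₁,y₂) ∈ B_{m,u+h} × B_{m,v+h}` with `x = y₁ - y₂` equals `C(2m-u-v, h)`. -/
theorem stmt9 (m u v h : ℕ) (huv : u + v ≤ 2 * m) (hh : h ≤ 2 * m - u - v)
    (x : Fin (2 * m) → ZMod 4) (hx : x ∈ Cset m u v) :
    (((Bset m (u + h)) ×ˢ (Bset m (v + h))).filter fun p => x = p.1 - p.2).card =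
      Nat.choose (2 * m - u - v) h := by
  classical
  rw [Cset, Finset.mem_filter] at hx
  obtain ⟨-, hx1, hx3, hx0⟩ := hx
  set Z : Finset (Fin (2 * m)) := Finset.univ.filter fun i => x i = 0 with hZdef
  have hZcard : Z.card = 2 * m - u - v := hx0
  have hxvals : ∀ i, x i = 0 ∨ x i = 1 ∨ x i = 3 := by
    apply mem_three x 0 1 3 (by decide) (by decide) (by decide)
    rw [hx0, hx1, hx3]; omega
  -- rewrite goal via powersetCard
  rw [← hZcard, ← Finset.card_powersetCard]
  apply Finset.card_bij' (i := fun p _ => Z.filter fun i => p.1 i = 1)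
    (j := fun s _ => (⟨fun i => if x i = 1 ∨ i ∈ s then 1 else 0,
        fun i => if x i = 3 ∨ i ∈ s then 1 else 0⟩ :
        (Fin (2 * m) → ZMod 4) × (Fin (2 * m) → ZMod 4)))
  · -- forward membership
    intro p hp
    simp only [Finset.mem_filter, Finset.mem_product, Bset] at hp
    obtain ⟨⟨h1, h2⟩, hxeq⟩ := hp
    simp only [Finset.mem_filter, Finset.mem_univ, true_and] at h1 h2
    have huh : u + h ≤ 2 * m := by omega
    have hvh : v + h ≤ 2 * m := by omega
    have hy1 : ∀ i, p.1 i = 0 ∨ p.1 i = 1 :=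
      mem_two p.1 0 1 (by decide) (by rw [h1.1, h1.2]; omega)
    have hy2 : ∀ i, p.2 i = 0 ∨ p.2 i = 1 :=
      mem_two p.2 0 1 (by decide) (by rw [h2.1, h2.2]; omega)
    rw [Finset.mem_powersetCard]
    constructor
    · exact Finset.filter_subset _ _
    · -- card = h
      have hsplit : (Finset.univ.filter fun i => p.1 i = 1) =
          (Finset.univ.filter fun i => x i = 1) ∪ (Z.filter fun i => p.1 i = 1) := by
        ext i
        have key : ∀ a b : ZMod 4, (a = 0 ∨ a = 1) → (b = 0 ∨ b = 1) →
            (a = 1 ↔ a - b = 1 ∨ (a - b = 0 ∧ a = 1)) := by decide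
        have hk := key (p.1 i) (p.2 i) (hy1 i) (hy2 i)
        have hxi : x i = p.1 i - p.2 i := by rw [hxeq]; rfl
        simp only [Finset.mem_union, Finset.mem_filter, Finset.mem_univ, true_and, hZdef, hxi]
        tauto
      have hdisj : Disjoint (Finset.univ.filter fun i => x i = 1)
          (Z.filter fun i => p.1 i = 1) := by
        rw [Finset.disjoint_left]
        intro j hj1 hj2
        simp only [Finset.mem_filter, Finset.mem_univ, true_and, hZdef] at hj1 hj2
        rw [hj1] at hj2
        exact absurd hj2.1 (by decide)
      have hcards := congrArg Finset.card hsplit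
      rw [Finset.card_union_of_disjoint hdisj] at hcards
      have : wt 1 p.1 = u + h := h1.2
      rw [wt] at this
      have hxu : (Finset.univ.filter fun i => x i = 1).card = u := hx1
      omega
  · -- backward membership
    intro s hs
    rw [Finset.mem_powersetCard] at hs
    obtain ⟨hsub, hcard⟩ := hs
    have hsZ : ∀ i ∈ s, x i = 0 := by
      intro i hi
      have := hsub hi
      simpa [hZdef] using this
    simp only [Finset.mem_filter, Finset.mem_product, Bset, Finset.mem_univ, true_and]
    have key1 : (Finset.univ.filter fun i =>
        (if x i = 1 ∨ i ∈ s then (1 : ZMod 4) else 0) = 1) =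
        (Finset.univ.filter fun i => x i = 1) ∪ s := by
      ext i
      simp only [Finset.mem_union, Finset.mem_filter, Finset.mem_univ, true_and]
      by_cases hc : x i = 1 ∨ i ∈ s
      · rw [if_pos hc]; simpa using hc
      · rw [if_neg hc]; push_neg at hc
        simp only [hc.1, hc.2, or_self, iff_false]
        decide
    have key3 : (Finset.univ.filter fun i =>
        (if x i = 3 ∨ i ∈ s then (1 : ZMod 4) else 0) = 1) =
        (Finset.univ.filter fun i => x i = 3) ∪ s := by
      ext i
      simp only [Finset.mem_union, Finset.mem_filter, Finset.mem_univ, true_and]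
      by_cases hc : x i = 3 ∨ i ∈ s
      · rw [if_pos hc]; simpa using hc
      · rw [if_neg hc]; push_neg at hc
        simp only [hc.1, hc.2, or_self, iff_false]
        decide
    have hd1 : Disjoint (Finset.univ.filter fun i => x i = 1) s := by
      rw [Finset.disjoint_left]
      intro j hj1 hj2
      simp only [Finset.mem_filter, Finset.mem_univ, true_and] at hj1
      rw [hsZ j hj2] at hj1
      exact absurd hj1 (by decide)
    have hd3 : Disjoint (Finset.univ.filter fun i => x i = 3) s := by
      rw [Finset.disjoint_left]
      intro j hj1 hj2
      simp only [Finset.mem_filter, Finset.mem_univ, true_and] at hj1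
      rw [hsZ j hj2] at hj1
      exact absurd hj1 (by decide)
    have hw1 : wt 1 (fun i => if x i = 1 ∨ i ∈ s then (1 : ZMod 4) else 0) = u + h := by
      rw [wt, key1, Finset.card_union_of_disjoint hd1, hcard]
      have hxu : (Finset.univ.filter fun i => x i = 1).card = u := hx1
      omega
    have hw1' : wt 1 (fun i => if x i = 3 ∨ i ∈ s then (1 : ZMod 4) else 0) = v + h := by
      rw [wt, key3, Finset.card_union_of_disjoint hd3, hcard]
      have hxv : (Finset.univ.filter fun i => x i = 3).card = v := hx3
      omega
    have wt0aux : ∀ y : Fin (2 * m) → ZMod 4, (∀ i, y i = 0 ∨ y i = 1) →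
        wt 0 y = 2 * m - wt 1 y := by
      intro y hy
      have hfilt : (Finset.univ.filter fun i => y i = 0) =
          (Finset.univ.filter fun i => ¬ y i = 1) := by
        ext i
        rcases hy i with h' | h' <;> simp [h'] <;> decide
      have := Finset.card_filter_add_card_filter_not
        (s := (Finset.univ : Finset (Fin (2 * m)))) (fun i => y i = 1)
      rw [wt, wt, hfilt]
      simp only [Fintype.card_fin, Finset.card_univ] at this
      omega
    have hvals1 : ∀ i, (if x i = 1 ∨ i ∈ s then (1 : ZMod 4) else 0) = 0 ∨
        (if x i = 1 ∨ i ∈ s then (1 : ZMod 4) else 0) = 1 := by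
      intro i; by_cases hc : x i = 1 ∨ i ∈ s
      · rw [if_pos hc]; right; rfl
      · rw [if_neg hc]; left; rfl
    have hvals3 : ∀ i, (if x i = 3 ∨ i ∈ s then (1 : ZMod 4) else 0) = 0 ∨
        (if x i = 3 ∨ i ∈ s then (1 : ZMod 4) else 0) = 1 := by
      intro i; by_cases hc : x i = 3 ∨ i ∈ s
      · rw [if_pos hc]; right; rfl
      · rw [if_neg hc]; left; rfl
    refine ⟨⟨⟨?_, hw1⟩, ?_, hw1'⟩, ?_⟩
    · rw [wt0aux _ hvals1, hw1]
    · rw [wt0aux _ hvals3, hw1']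
    · funext i
      rcases hxvals i with h0 | h1 | h3
      · by_cases hc : i ∈ s
        · simp only [Pi.sub_apply, h0, hc]; decide
        · simp only [Pi.sub_apply, h0, hc]; decide
      · have hns : i ∉ s := by
          intro hc
          rw [hsZ i hc] at h1
          exact absurd h1 (by decide)
        simp only [Pi.sub_apply, h1, hns]; decide
      · have hns : i ∉ s := by
          intro hc
          rw [hsZ i hc] at h3
          exact absurd h3 (by decide)
        simp only [Pi.sub_apply, h3, hns]; decide
  ·
    intro p hp
    simp only [Finset.mem_filter, Finset.mem_product, Bset] at hp
    obtain ⟨⟨h1, h2⟩, hxeq⟩ := hp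
    simp only [Finset.mem_filter, Finset.mem_univ, true_and] at h1 h2
    have huh : u + h ≤ 2 * m := by omega
    have hvh : v + h ≤ 2 * m := by omega
    have hy1 : ∀ i, p.1 i = 0 ∨ p.1 i = 1 :=
      mem_two p.1 0 1 (by decide) (by rw [h1.1, h1.2]; omega)
    have hy2 : ∀ i, p.2 i = 0 ∨ p.2 i = 1 :=
      mem_two p.2 0 1 (by decide) (by rw [h2.1, h2.2]; omega)
    have hmemZ : ∀ i, (i ∈ Z.filter fun j => p.1 j = 1) ↔ (x i = 0 ∧ p.1 i = 1) := by
      intro i; simp [hZdef]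
    ext1
    · funext i
      have key : ∀ a b : ZMod 4, (a = 0 ∨ a = 1) → (b = 0 ∨ b = 1) →
          (if a - b = 1 ∨ (a - b = 0 ∧ a = 1) then (1 : ZMod 4) else 0) = a := by decide
      have := key (p.1 i) (p.2 i) (hy1 i) (hy2 i)
      simp only [hmemZ i, hxeq, Pi.sub_apply]
      exact this
    · funext i
      have key : ∀ a b : ZMod 4, (a = 0 ∨ a = 1) → (b = 0 ∨ b = 1) →
          (if a - b = 3 ∨ (a - b = 0 ∧ a = 1) then (1 : ZMod 4) else 0) = b := by decide
      have := key (p.1 i) (p.2 i) (hy1 i) (hy2 i)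
      simp only [hmemZ i, hxeq, Pi.sub_apply]
      exact this
  · -- right inverse
    intro s hs
    rw [Finset.mem_powersetCard] at hs
    obtain ⟨hsub, -⟩ := hs
    have hsZ : ∀ i ∈ s, x i = 0 := by
      intro i hi
      have := hsub hi
      simpa [hZdef] using this
    ext i
    simp only [Finset.mem_filter, hZdef, Finset.mem_univ, true_and]
    constructor
    · rintro ⟨hxi, hif⟩
      by_cases hc : x i = 1 ∨ i ∈ s
      · rcases hc with hc | hc
        · rw [hxi] at hc; exact absurd hc (by decide)
        · exact hc
      · rw [if_neg hc] at hif
        exact absurd hif (by decide)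
    · intro hi
      exact ⟨hsZ i hi, by simp [hi]⟩
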